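/- arXiv:math/0503114 — 2 statements merged into one kernel-verified Lean document; each statement's English description precedes it below -/
import Mathlib

section
/- Let P_{m,k}(q) = \det( h_{m-k-i+2j-1}(\{1,q\}^{i-j+2}) )_{i,j \in \{0,\dots,k-1\}}. Then P_{m,k} is a polynomial in q with nonnegative integer coefficients. -/
open Finset Polynomial

/-- `h_j({1,q}^r)` as a polynomial in `q` over `ℤ`: the complete homogeneous symmetric
polynomial of degree `j` in `2r` variables, `r` specialized to `q` and `r` to `1`;
it vanishes for `j < 0`, and `h_0 = 1`. -/
noncomputable def hgen (j r : ℤ) : Polynomial ℤ :=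
  if 0 ≤ j ∧ 0 < r then
    ∑ i ∈ range (j.toNat + 1),
      ((((r - 1).toNat + i).choose (r - 1).toNat : Polynomial ℤ) *
        ((j.toNat + (r - 1).toNat - i).choose (r - 1).toNat : Polynomial ℤ)) * X ^ i
  else if j = 0 then 1 else 0

/-- The `q`-Faulhaber polynomial
`P_{m,k} = det( h_{m-k-i+2j-1}({1,q}^{i-j+2}) )_{i,j ∈ {0,…,k-1}}`. -/
noncomputable def P (m k : ℕ) : Polynomial ℤ :=
  Matrix.det (Matrix.of fun i j : Fin k =>
    hgen ((m : ℤ) - k - i + 2 * j - 1) ((i : ℤ) - j + 2))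


namespace QF

/-- coefficientwise nonnegativity -/
def PosP (p : Polynomial ℤ) : Prop := ∀ n, 0 ≤ p.coeff n

lemma PosP.zero : PosP 0 := fun n => by simp
lemma PosP.one : PosP 1 := fun n => by
  rcases eq_or_ne n 0 with h | h <;> simp [Polynomial.coeff_one, h]
lemma PosP.add {p q} (hp : PosP p) (hq : PosP q) : PosP (p + q) := fun n => by
  rw [Polynomial.coeff_add]; exact add_nonneg (hp n) (hq n)
lemma PosP.mul {p q} (hp : PosP p) (hq : PosP q) : PosP (p * q) := fun n => by
  rw [Polynomial.coeff_mul]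
  exact Finset.sum_nonneg fun x _ => mul_nonneg (hp _) (hq _)
lemma PosP.X : PosP (X : Polynomial ℤ) := fun n => by
  rcases eq_or_ne n 1 with h | h
  · simp [Polynomial.coeff_X, h]
  · simp [Polynomial.coeff_X, Ne.symm h]
lemma PosP.pow {p} (hp : PosP p) (t : ℕ) : PosP (p ^ t) := by
  induction t with
  | zero => simpa using PosP.one
  | succ t ih => rw [pow_succ]; exact ih.mul hp
lemma PosP.sum {α} (s : Finset α) (f : α → Polynomial ℤ)
    (h : ∀ a ∈ s, PosP (f a)) : PosP (∑ a ∈ s, f a) := by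
  classical
  induction s using Finset.induction_on with
  | empty => simpa using PosP.zero
  | insert _ _ hnot ih =>
      rw [Finset.sum_insert hnot]
      exact (h _ (Finset.mem_insert_self _ _)).add
        (ih fun a ha => h a (Finset.mem_insert_of_mem ha))
lemma PosP.natCast (c : ℕ) : PosP (c : Polynomial ℤ) := fun n => by
  rcases eq_or_ne n 0 with h | h <;> simp [Polynomial.coeff_natCast_ite, h]

/-- variable with index `y` : `X` if `y` odd, `1` if even. -/
noncomputable def zz (y : ℕ) : Polynomial ℤ := if y % 2 = 1 then X else 1

lemma PosP.zz (y : ℕ) : PosP (zz y) := by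
  unfold QF.zz; split <;> [exact PosP.X; exact PosP.one]

/-- complete homogeneous polynomial of degree `d` in variables `zz a, …, zz b`. -/
noncomputable def hh (a b d : ℕ) : Polynomial ℤ :=
  if h : a ≤ b then ∑ t ∈ range (d + 1), zz a ^ t * hh (a + 1) b (d - t)
  else if d = 0 then 1 else 0
termination_by b + 1 - a
decreasing_by omega

lemma hh_of_gt {a b : ℕ} (h : b < a) (d : ℕ) :
    hh a b d = if d = 0 then 1 else 0 := by
  rw [hh]; rw [dif_neg (by omega)]

lemma hh_rec {a b : ℕ} (h : a ≤ b) (d : ℕ) :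
    hh a b d = ∑ t ∈ range (d + 1), zz a ^ t * hh (a + 1) b (d - t) := by
  conv_lhs => rw [hh]
  rw [dif_pos h]

lemma hh_zero (a b : ℕ) : hh a b 0 = 1 := by
  rcases le_or_gt a b with h | h
  · rw [hh_rec h]; simp [hh_zero (a + 1) b]
  · rw [hh_of_gt h]; simp
termination_by b + 1 - a
decreasing_by omega

lemma hh_self (a d : ℕ) : hh a a d = zz a ^ d := by
  rw [hh_rec le_rfl]
  rw [Finset.sum_eq_single d]
  · rw [hh_of_gt (by omega), Nat.sub_self, if_pos rfl, mul_one]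
  · intro t ht hne
    rw [hh_of_gt (by omega), if_neg (by simp at ht; omega), mul_zero]
  · intro h; simp at h

end QF

namespace QF

lemma hockey (r n : ℕ) :
    ∑ e ∈ range (n + 1), (e + r).choose r = (n + r + 1).choose (r + 1) := by
  induction n with
  | zero => simp
  | succ n ih =>
    rw [Finset.sum_range_succ, ih]
    have h1 : n + 1 + r + 1 = (n + r + 1) + 1 := by ring
    have h2 : n + 1 + r = n + r + 1 := by ring
    rw [h1, h2, Nat.choose_succ_succ (n + r + 1) r, Nat.add_comm]

section Tri
variable {M : Type*} [AddCommMonoid M]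

lemma tri1 (n : ℕ) (f : ℕ → ℕ → M) :
    ∑ e ∈ range (n + 1), ∑ w ∈ range (e + 1), f e w
      = ∑ w ∈ range (n + 1), ∑ e ∈ Icc w n, f e w := by
  induction n with
  | zero => simp
  | succ n ih =>
    rw [Finset.sum_range_succ, ih, Finset.sum_range_succ (fun w => ∑ e ∈ Icc w (n+1), f e w)]
    have hIcc : ∀ w ∈ range (n + 1), ∑ e ∈ Icc w (n + 1), f e w
        = (∑ e ∈ Icc w n, f e w) + f (n + 1) w := by
      intro w hw
      rw [Finset.sum_Icc_succ_top (by simp at hw; omega)]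
    rw [Finset.sum_congr rfl hIcc, Finset.sum_add_distrib]
    have : ∑ e ∈ Icc (n+1) (n+1), f e (n+1) = f (n+1) (n+1) := by simp
    rw [this, Finset.sum_range_succ (fun w => f (n+1) w)]
    abel

lemma tri2 (n : ℕ) (g : ℕ → ℕ → M) :
    ∑ t ∈ range (n + 1), ∑ w ∈ range (n - t + 1), g t w
      = ∑ W ∈ range (n + 1), ∑ t ∈ range (W + 1), g t (W - t) := by
  induction n with
  | zero => simp
  | succ n ih =>
    rw [Finset.sum_range_succ]
    have hstep : ∀ t ∈ range (n + 1),
        ∑ w ∈ range (n + 1 - t + 1), g t w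
          = (∑ w ∈ range (n - t + 1), g t w) + g t (n + 1 - t) := by
      intro t ht
      simp only [Finset.mem_range] at ht
      have : n + 1 - t + 1 = (n - t + 1) + 1 := by omega
      rw [this, Finset.sum_range_succ]
      congr 2
      omega
    rw [Finset.sum_congr rfl hstep, Finset.sum_add_distrib, ih]
    have h0 : ∑ w ∈ range (n + 1 - (n+1) + 1), g (n+1) w = g (n+1) 0 := by
      simp
    rw [h0]
    rw [Finset.sum_range_succ (fun W => ∑ t ∈ range (W + 1), g t (W - t))]
    have hlast : ∑ t ∈ range (n + 1 + 1), g t (n + 1 - t)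
        = (∑ t ∈ range (n + 1), g t (n + 1 - t)) + g (n+1) 0 := by
      rw [Finset.sum_range_succ]
      simp
    conv_rhs => rw [Finset.sum_range_succ]
    rw [hlast]
    conv_rhs => rw [Finset.sum_range_succ (fun x => ∑ t ∈ range (x + 1), g t (x - t))]
    abel

end Tri

lemma hockey_Icc (r w n : ℕ) (h : w ≤ n) :
    ∑ e ∈ Icc w n, (e + r - w).choose r = (n - w + r + 1).choose (r + 1) := by
  induction n with
  | zero =>
    have hw : w = 0 := by omega
    subst hw; simp
  | succ n ih =>
    rcases eq_or_lt_of_le h with h1 | h1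
    · rw [← h1]; simp
    · have hwn : w ≤ n := by omega
      rw [Finset.sum_Icc_succ_top h, ih hwn]
      have h2 : n + 1 + r - w = (n - w + r) + 1 := by omega
      have h3 : n + 1 - w + r + 1 = (n - w + r + 1) + 1 := by omega
      rw [h2, h3, Nat.choose_succ_succ (n - w + r + 1) r, Nat.add_comm]

/-- the binomial closed form -/
noncomputable def hgN (rm1 d : ℕ) : Polynomial ℤ :=
  ∑ w ∈ range (d + 1),
    (((rm1 + w).choose rm1 : Polynomial ℤ) * (((d + rm1 - w).choose rm1 : ℕ) : Polynomial ℤ)) * X ^ w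

lemma zz_even {a : ℕ} (h : a % 2 = 0) : zz a = 1 := by simp [zz, h]
lemma zz_odd {a : ℕ} (h : a % 2 = 1) : zz a = X := by simp [zz, h]

lemma hh_eq_hgN (rm1 : ℕ) : ∀ a d : ℕ, a % 2 = 1 →
    hh a (a + (2 * rm1 + 1)) d = hgN rm1 d := by
  induction rm1 with
  | zero =>
    intro a d ha
    rw [hh_rec (by omega)]
    have hb : a + (2 * 0 + 1) = a + 1 := by ring
    rw [hgN]
    refine Finset.sum_congr rfl fun t ht => ?_
    rw [zz_odd ha]
    have : hh (a + 1) (a + (2 * 0 + 1)) (d - t) = zz (a+1) ^ (d - t) := by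
      rw [hb, hh_self]
    rw [this, zz_even (by omega), one_pow, mul_one]
    simp [Nat.choose_zero_right]
  | succ rm1 ih =>
    intro a d ha
    rw [hh_rec (by omega)]
    -- inner: hh (a+1) b (d-t) = ∑ s, hh (a+2) b (d-t-s)
    have inner : ∀ e : ℕ, hh (a + 1) (a + (2 * (rm1+1) + 1)) e
        = ∑ e' ∈ range (e + 1), hgN rm1 e' := by
      intro e
      rw [hh_rec (by omega), zz_even (by omega)]
      have : ∀ s ∈ range (e + 1),
          (1:Polynomial ℤ) ^ s * hh (a + 1 + 1) (a + (2 * (rm1+1) + 1)) (e - s)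
            = hgN rm1 (e - s) := by
        intro s hs
        rw [one_pow, one_mul]
        have harg : a + (2 * (rm1+1) + 1) = (a + 2) + (2 * rm1 + 1) := by ring
        rw [show a + 1 + 1 = a + 2 from by ring, harg, ih (a+2) (e-s) (by omega)]
      rw [Finset.sum_congr rfl this]
      have h := Finset.sum_range_reflect (fun e' => hgN rm1 e') (e + 1)
      simpa using h
    -- step 1: rewrite all inner hh's
    have step1 : ∀ t ∈ range (d + 1),
        zz a ^ t * hh (a + 1) (a + (2 * (rm1+1) + 1)) (d - t)
          = ∑ w ∈ range ((d - t) + 1),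
              ((((rm1 + w).choose rm1 * ((d - t) - w + rm1 + 1).choose (rm1+1) : ℕ)) : Polynomial ℤ)
                * X ^ (w + t) := by
      intro t ht
      rw [inner (d - t), zz_odd ha]
      -- ∑ e' ∈ range (d-t+1), hgN rm1 e'  =  K (d-t)
      have K : ∑ e' ∈ range ((d - t) + 1), hgN rm1 e'
          = ∑ w ∈ range ((d - t) + 1),
              ((((rm1 + w).choose rm1 * ((d - t) - w + rm1 + 1).choose (rm1+1) : ℕ)) : Polynomial ℤ)
                * X ^ w := by
        unfold hgN
        have hcast : ∀ e ∈ range ((d - t) + 1), ∀ w ∈ range (e + 1),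
            (((rm1 + w).choose rm1 : Polynomial ℤ) * (((e + rm1 - w).choose rm1 : ℕ) : Polynomial ℤ)) * X ^ w
              = ((((rm1 + w).choose rm1 * (e + rm1 - w).choose rm1 : ℕ)) : Polynomial ℤ) * X ^ w := by
          intro e _ w _
          push_cast
          ring
        rw [Finset.sum_congr rfl (fun e he => Finset.sum_congr rfl (hcast e he))]
        rw [tri1 (d - t) (fun e w => ((((rm1 + w).choose rm1 * (e + rm1 - w).choose rm1 : ℕ)) : Polynomial ℤ) * X ^ w)]
        refine Finset.sum_congr rfl fun w hw => ?_
        simp only [Finset.mem_range] at hw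
        have hw' : w ≤ d - t := by omega
        have hIcc : ∑ e ∈ Icc w (d - t),
            ((((rm1 + w).choose rm1 * (e + rm1 - w).choose rm1 : ℕ)) : Polynomial ℤ) * X ^ w
            = ((((rm1 + w).choose rm1 : ℕ) * ∑ e ∈ Icc w (d - t), (e + rm1 - w).choose rm1 : ℕ) : Polynomial ℤ) * X ^ w := by
          rw [← Finset.sum_mul, ← Nat.cast_sum, ← Finset.mul_sum]
        rw [hIcc, hockey_Icc rm1 w (d - t) hw']
      rw [K, Finset.mul_sum]
      refine Finset.sum_congr rfl fun w hw => ?_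
      rw [pow_add]
      ring
    rw [Finset.sum_congr rfl step1]
    rw [tri2 d (fun t w => ((((rm1 + w).choose rm1 * ((d - t) - w + rm1 + 1).choose (rm1+1) : ℕ)) : Polynomial ℤ) * X ^ (w + t))]
    unfold hgN
    refine Finset.sum_congr rfl fun W hW => ?_
    simp only [Finset.mem_range] at hW
    have hWd : W ≤ d := by omega
    have hterm : ∀ t ∈ range (W + 1),
        ((((rm1 + (W - t)).choose rm1 * ((d - t) - (W - t) + rm1 + 1).choose (rm1+1) : ℕ)) : Polynomial ℤ) * X ^ ((W - t) + t)
          = ((((rm1 + (W - t)).choose rm1 * ((d - W) + rm1 + 1).choose (rm1+1) : ℕ)) : Polynomial ℤ) * X ^ W := by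
      intro t ht
      simp only [Finset.mem_range] at ht
      have e1 : (d - t) - (W - t) = d - W := by omega
      have e2 : (W - t) + t = W := by omega
      rw [e1, e2]
    rw [Finset.sum_congr rfl hterm]
    rw [← Finset.sum_mul]
    have hsum : ∑ t ∈ range (W + 1),
        ((((rm1 + (W - t)).choose rm1 * ((d - W) + rm1 + 1).choose (rm1+1) : ℕ)) : Polynomial ℤ)
        = ((((W + rm1 + 1).choose (rm1 + 1) * ((d - W) + rm1 + 1).choose (rm1+1) : ℕ)) : Polynomial ℤ) := by
      rw [← Nat.cast_sum, ← Finset.sum_mul]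
      have hrefl : ∑ t ∈ range (W + 1), (rm1 + (W - t)).choose rm1
          = ∑ t ∈ range (W + 1), (rm1 + t).choose rm1 := by
        have h := Finset.sum_range_reflect (fun t => (rm1 + t).choose rm1) (W + 1)
        calc ∑ t ∈ range (W + 1), (rm1 + (W - t)).choose rm1
            = ∑ t ∈ range (W + 1), (rm1 + (W + 1 - 1 - t)).choose rm1 := by
              refine Finset.sum_congr rfl fun t ht => ?_
              have he : W + 1 - 1 - t = W - t := by omega
              rw [he]
          _ = ∑ t ∈ range (W + 1), (rm1 + t).choose rm1 := h
      rw [hrefl]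
      have hhk : ∑ t ∈ range (W + 1), (rm1 + t).choose rm1 = (W + rm1 + 1).choose (rm1 + 1) := by
        have h := hockey rm1 W
        calc ∑ t ∈ range (W + 1), (rm1 + t).choose rm1
            = ∑ t ∈ range (W + 1), (t + rm1).choose rm1 := by
              refine Finset.sum_congr rfl fun t _ => ?_
              rw [Nat.add_comm]
          _ = (W + rm1 + 1).choose (rm1 + 1) := h
      rw [hhk]
    rw [hsum]
    have e3 : rm1 + 1 + W = W + rm1 + 1 := by ring
    have e4 : d + (rm1 + 1) - W = (d - W) + rm1 + 1 := by omega
    rw [e3, e4]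
    push_cast
    ring

end QF

namespace QF
open Matrix

abbrev Mat := Matrix ℕ ℕ (Polynomial ℤ)

/-- all minors (of all sizes, with increasing row/col selections) are
coefficientwise nonnegative -/
def Good (M : Mat) : Prop :=
  ∀ (t : ℕ) (r c : Fin t → ℕ), StrictMono r → StrictMono c →
    PosP ((M.submatrix r c).det)

noncomputable def colAdd (M : Mat) (a a' : ℕ) (z : Polynomial ℤ) : Mat :=
  M.updateCol a' (fun s => M s a' + z * M s a)

noncomputable def colKill (M : Mat) (a : ℕ) : Mat := M.updateCol a 0

lemma colAdd_apply (M : Mat) (a a' : ℕ) (z : Polynomial ℤ) (s c : ℕ) :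
    colAdd M a a' z s c = if c = a' then M s a' + z * M s a else M s c := by
  rw [colAdd, Matrix.updateCol_apply]

lemma colKill_apply (M : Mat) (a : ℕ) (s c : ℕ) :
    colKill M a s c = if c = a then 0 else M s c := by
  rw [colKill, Matrix.updateCol_apply]; rfl

lemma good_one : Good 1 := by
  intro t
  induction t with
  | zero =>
    intro r c _ _
    rw [Matrix.det_fin_zero]
    exact PosP.one
  | succ t ih =>
    intro r c hr hc
    rcases lt_trichotomy (r 0) (c 0) with h | h | h
    · have hrow : ∀ j, ((1 : Mat).submatrix r c) 0 j = 0 := by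
        intro j
        have : r 0 ≠ c j := by
          have : c 0 ≤ c j := hc.monotone (Fin.zero_le j)
          omega
        simp [Matrix.one_apply, this]
      rw [Matrix.det_eq_zero_of_row_eq_zero 0 hrow]
      exact PosP.zero
    · have hcol0 : ∀ i : Fin (t+1), ((1 : Mat).submatrix r c) i 0
          = if i = 0 then 1 else 0 := by
        intro i
        rcases eq_or_ne i 0 with hi | hi
        · simp [hi, Matrix.one_apply, h]
        · have : r i ≠ c 0 := by
            have h1 : r 0 < r i := hr (by exact Fin.pos_of_ne_zero hi)
            omega
          simp [Matrix.one_apply, this, hi]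
      rw [Matrix.det_succ_column_zero]
      have hsum : ∀ i : Fin (t+1), i ≠ 0 →
          (-1) ^ (i : ℕ) * ((1 : Mat).submatrix r c) i 0 *
            ((((1 : Mat).submatrix r c).submatrix i.succAbove Fin.succ).det) = 0 := by
        intro i hi
        rw [hcol0 i, if_neg hi]
        ring
      rw [Finset.sum_eq_single 0 (fun i _ hi => hsum i hi) (by intro h; simp at h)]
      rw [hcol0 0, if_pos rfl]
      simp only [Fin.val_zero, pow_zero, one_mul, mul_one]
      rw [Matrix.submatrix_submatrix]
      have h0 : (0 : Fin (t+1)).succAbove = Fin.succ := Fin.succAbove_zero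
      rw [h0]
      exact ih (r ∘ Fin.succ) (c ∘ Fin.succ)
        (hr.comp fun _ _ hlt => Fin.succ_lt_succ_iff.mpr hlt)
        (hc.comp fun _ _ hlt => Fin.succ_lt_succ_iff.mpr hlt)
    · have hcol : ∀ i, ((1 : Mat).submatrix r c) i 0 = 0 := by
        intro i
        have : r i ≠ c 0 := by
          have : r 0 ≤ r i := hr.monotone (Fin.zero_le i)
          omega
        simp [Matrix.one_apply, this]
      rw [Matrix.det_eq_zero_of_column_eq_zero 0 hcol]
      exact PosP.zero

lemma good_colKill {M : Mat} (hM : Good M) (a : ℕ) : Good (colKill M a) := by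
  intro t r c hr hc
  by_cases hex : ∃ t₀, c t₀ = a
  · obtain ⟨t₀, ht₀⟩ := hex
    have : ∀ s, ((colKill M a).submatrix r c) s t₀ = 0 := by
      intro s
      simp [Matrix.submatrix_apply, colKill_apply, ht₀]
    rw [Matrix.det_eq_zero_of_column_eq_zero t₀ this]
    exact PosP.zero
  · have heq : (colKill M a).submatrix r c = M.submatrix r c := by
      ext s j
      simp only [Matrix.submatrix_apply, colKill_apply]
      rw [if_neg (fun h => hex ⟨j, h⟩)]
    rw [heq]
    exact hM t r c hr hc

end QF

namespace QF

lemma good_colAdd {M : Mat} (hM : Good M) {a a' : ℕ} (haa : a < a')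
    {z : Polynomial ℤ} (hz : PosP z)
    (hgap : ∀ w, a < w → w < a' → ∀ s, M s w = 0) :
    Good (colAdd M a a' z) := by
  intro t r c hr hc
  by_cases hex : ∃ t₀, c t₀ = a'
  · obtain ⟨t₀, ht₀⟩ := hex
    have hsub : (colAdd M a a' z).submatrix r c
        = (M.submatrix r c).updateCol t₀
            (fun s => M (r s) a' + z * M (r s) a) := by
      ext s j
      rw [Matrix.updateCol_apply]
      simp only [Matrix.submatrix_apply, colAdd_apply]
      rcases eq_or_ne j t₀ with hj | hj
      · rw [if_pos hj, if_pos (hj ▸ ht₀)]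
      · rw [if_neg hj, if_neg (fun h => hj (hc.injective ((ht₀ ▸ h : c j = c t₀))))]
    rw [hsub]
    have hdet :
        ((M.submatrix r c).updateCol t₀
          (fun s => M (r s) a' + z * M (r s) a)).det
        = ((M.submatrix r c).updateCol t₀ (fun s => M (r s) a')).det
          + z * ((M.submatrix r c).updateCol t₀ (fun s => M (r s) a)).det := by
      have hfun : (fun s => M (r s) a' + z * M (r s) a)
            = (fun s => M (r s) a') + (z • fun s => M (r s) a) := by
        funext s
        simp [smul_eq_mul]
      rw [hfun, Matrix.det_updateCol_add, Matrix.det_updateCol_smul]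
    rw [hdet]
    have hfirst : (M.submatrix r c).updateCol t₀ (fun s => M (r s) a')
        = M.submatrix r c := by
      have : (fun s => M (r s) a') = fun s => (M.submatrix r c) s t₀ := by
        funext s; simp [Matrix.submatrix_apply, ht₀]
      rw [this, Matrix.updateCol_eq_self]
    rw [hfirst]
    by_cases hmid : ∃ t₁, a < c t₁ ∧ c t₁ < a'
    · obtain ⟨t₁, ht₁a, ht₁b⟩ := hmid
      have ht₁₀ : t₁ ≠ t₀ := by
        intro h; rw [h, ht₀] at ht₁b; omega
      have hz₁ : ∀ s, (M.submatrix r c) s t₁ = 0 := fun s =>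
        hgap (c t₁) ht₁a ht₁b (r s)
      rw [Matrix.det_eq_zero_of_column_eq_zero t₁ hz₁]
      have hz₂ : ∀ s, ((M.submatrix r c).updateCol t₀
          (fun s => M (r s) a)) s t₁ = 0 := by
        intro s
        rw [Matrix.updateCol_apply, if_neg ht₁₀]
        exact hz₁ s
      rw [Matrix.det_eq_zero_of_column_eq_zero t₁ hz₂]
      rw [zero_add, mul_zero]
      exact PosP.zero
    · by_cases hdup : ∃ t₁, c t₁ = a
      · obtain ⟨t₁, ht₁⟩ := hdup
        have ht₁₀ : t₁ ≠ t₀ := by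
          intro h; rw [h, ht₀] at ht₁; omega
        have hcols : ∀ s, ((M.submatrix r c).updateCol t₀
            (fun s => M (r s) a)) s t₁
            = ((M.submatrix r c).updateCol t₀ (fun s => M (r s) a)) s t₀ := by
          intro s
          rw [Matrix.updateCol_apply, Matrix.updateCol_apply,
            if_neg ht₁₀, if_pos rfl]
          simp [Matrix.submatrix_apply, ht₁]
        rw [Matrix.det_zero_of_column_eq ht₁₀ hcols, mul_zero, add_zero]
        exact hM t r c hr hc
      · -- replaced column selection is still strictly monotone
        set c' : Fin t → ℕ := fun j => if j = t₀ then a else c j with hc'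
        have hsub2 : (M.submatrix r c).updateCol t₀ (fun s => M (r s) a)
            = M.submatrix r c' := by
          ext s j
          rw [Matrix.updateCol_apply]
          rcases eq_or_ne j t₀ with hj | hj
          · rw [if_pos hj]; simp [hc', hj]
          · rw [if_neg hj]; simp [hc', hj]
        have hc'mono : StrictMono c' := by
          intro j j' hjj
          simp only [hc']
          rcases eq_or_ne j t₀ with hj | hj
          · rw [if_pos hj]
            have : c t₀ < c j' := hj ▸ hc hjj
            rw [if_neg (by intro h; subst h; exact absurd (hj ▸ hjj) (lt_irrefl _))]
            omega
          · rw [if_neg hj]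
            rcases eq_or_ne j' t₀ with hj' | hj'
            · rw [if_pos hj']
              have h1 : c j < c t₀ := hj' ▸ hc hjj
              rw [ht₀] at h1
              have h2 : ¬(a < c j ∧ c j < a') := fun h => hmid ⟨j, h⟩
              have h3 : c j ≠ a := fun h => hdup ⟨j, h⟩
              omega
            · rw [if_neg hj']
              exact hc hjj
        rw [hsub2]
        exact (hM t r c hr hc).add (hz.mul (hM t r c' hr hc'mono))
  · have heq : (colAdd M a a' z).submatrix r c = M.submatrix r c := by
      ext s j
      simp only [Matrix.submatrix_apply, colAdd_apply]
      rw [if_neg (fun h => hex ⟨j, h⟩)]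
    rw [heq]
    exact hM t r c hr hc

end QF

namespace QF

lemma good_mask {M : Mat} (hM : Good M) (k : ℕ) :
    Good (Matrix.of fun s c => if c < k then M s c else 0) := by
  intro t r c hr hc
  by_cases hall : ∀ j, c j < k
  · have heq : (Matrix.of fun s c => if c < k then M s c else 0).submatrix r c
        = M.submatrix r c := by
      ext s j
      simp [Matrix.submatrix_apply, hall j]
    rw [heq]
    exact hM t r c hr hc
  · push_neg at hall
    obtain ⟨j₀, hj₀⟩ := hall
    have : ∀ s, ((Matrix.of fun s c => if c < k then M s c else 0).submatrix r c) s j₀ = 0 := by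
      intro s
      simp [Matrix.submatrix_apply, if_neg (by omega : ¬ (c j₀ < k))]
    rw [Matrix.det_eq_zero_of_column_eq_zero j₀ this]
    exact PosP.zero

noncomputable def init (k : ℕ) : Mat :=
  Matrix.of fun s c => if c < k then (1 : Mat) s c else 0

lemma init_apply (k s c : ℕ) :
    init k s c = if s = c ∧ c < k then 1 else 0 := by
  simp only [init, Matrix.of_apply, Matrix.one_apply]
  by_cases h1 : c < k <;> by_cases h2 : s = c <;> simp [h1, h2]

lemma good_init (k : ℕ) : Good (init k) := good_mask good_one k

noncomputable def sweep (k : ℕ) (z : Polynomial ℤ) : ℕ → Mat → Mat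
  | 0, M => M
  | c + 1, M => colAdd (sweep k z c M) (k + c) (k + c + 1) z

lemma good_sweep {M : Mat} (hM : Good M) (k : ℕ) {z : Polynomial ℤ}
    (hz : PosP z) (c : ℕ) : Good (sweep k z c M) := by
  induction c with
  | zero => exact hM
  | succ c ih =>
    exact good_colAdd ih (by omega) hz (by intro w h1 h2; omega)

lemma sweep_out (k : ℕ) (z : Polynomial ℤ) (c : ℕ) (M : Mat) (s₀ s : ℕ)
    (h : s < k + 1 ∨ k + c < s) : sweep k z c M s₀ s = M s₀ s := by
  induction c with
  | zero => rfl
  | succ c ih =>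
    rw [sweep, colAdd_apply, if_neg (by omega)]
    exact ih (by omega)

lemma sweep_pos (k : ℕ) (z : Polynomial ℤ) (c : ℕ) (M : Mat) (s₀ : ℕ) :
    ∀ v, v ≤ c → sweep k z c M s₀ (k + v)
      = ∑ p ∈ range (v + 1), z ^ (v - p) * M s₀ (k + p) := by
  induction c with
  | zero =>
    intro v hv
    have hv0 : v = 0 := by omega
    subst hv0
    show M s₀ (k + 0) = _
    simp
  | succ c ih =>
    intro v hv
    rcases Nat.lt_or_ge v (c + 1) with hvc | hvc
    · rw [sweep, colAdd_apply, if_neg (by omega)]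
      exact ih v (by omega)
    · have hv1 : v = c + 1 := by omega
      subst hv1
      rw [sweep, colAdd_apply, if_pos (by omega)]
      have h1 : sweep k z c M s₀ (k + (c + 1)) = M s₀ (k + (c + 1)) := by
        have := sweep_out k z c M s₀ (k + (c + 1)) (by omega)
        simpa using this
      have h2 : sweep k z c M s₀ (k + c)
          = ∑ p ∈ range (c + 1), z ^ (c - p) * M s₀ (k + p) := ih c le_rfl
      rw [show k + c + 1 = k + (c+1) from by omega] at *
      rw [h1, h2, Finset.sum_range_succ (fun p => z ^ (c + 1 - p) * M s₀ (k + p))]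
      have h3 : z ^ (c + 1 - (c+1)) * M s₀ (k + (c+1)) = M s₀ (k + (c+1)) := by
        simp
      rw [h3, Finset.mul_sum]
      have h4 : ∀ p ∈ range (c + 1),
          z * (z ^ (c - p) * M s₀ (k + p)) = z ^ (c + 1 - p) * M s₀ (k + p) := by
        intro p hp
        simp only [Finset.mem_range] at hp
        rw [← mul_assoc, ← pow_succ']
        congr 2
        omega
      rw [Finset.sum_congr rfl h4]
      ring

noncomputable def inj (k y : ℕ) (M : Mat) : Mat :=
  if 4 ≤ y ∧ y % 2 = 0 ∧ y ≤ 2 * k + 2 then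
    colKill (colAdd M ((y - 4) / 2) (k + (y - 4) / 2) 1) ((y - 4) / 2)
  else M

def hi (m k y : ℕ) : ℕ := m - k - 1 + 2 * min (k - 1) ((y - 1) / 2)

noncomputable def stage (m k y : ℕ) (M : Mat) : Mat :=
  sweep k (zz y) (hi m k y) (inj k y M)

noncomputable def U (m k : ℕ) : ℕ → Mat
  | 0 => init k
  | t + 1 => stage m k (2 * k + 2 - t) (U m k t)

end QF

namespace QF

lemma sweep_virgin (k : ℕ) (z : Polynomial ℤ) (c : ℕ) (M : Mat) (u : ℕ)
    (h : ∀ p, p ≤ u → ∀ s, M s (k + p) = 0) :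
    ∀ s, sweep k z c M s (k + u) = 0 := by
  intro s
  rcases le_or_gt u c with h1 | h1
  · rw [sweep_pos k z c M s u h1]
    refine Finset.sum_eq_zero fun p hp => ?_
    simp only [Finset.mem_range] at hp
    rw [h p (by omega) s, mul_zero]
  · rw [sweep_out k z c M s (k + u) (by omega)]
    exact h u le_rfl s

theorem mainInv (m k : ℕ) : ∀ t,
    Good (U m k t)
    ∧ (∀ i', i' < k → 2 * i' + 4 > 2 * k + 2 - t → ∀ s, U m k t s i' = 0)
    ∧ (∀ u, u < k → 2 * u + 4 ≤ 2 * k + 2 - t → ∀ s, U m k t s (k + u) = 0) := by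
  intro t
  induction t with
  | zero =>
    refine ⟨good_init k, fun i' hi' h2 s => by omega, fun u hu h2 s => ?_⟩
    show init k s (k + u) = 0
    rw [init_apply, if_neg (by omega)]
  | succ t ih =>
    obtain ⟨ihG, ihP, ihV⟩ := ih
    set y := 2 * k + 2 - t with hy
    have hUt1 : U m k (t + 1) = sweep k (zz y) (hi m k y) (inj k y (U m k t)) := rfl
    -- properties of N := inj k y (U m k t)
    have hN : Good (inj k y (U m k t))
        ∧ (∀ i', i' < k → 2 * i' + 4 ≥ y → ∀ s, inj k y (U m k t) s i' = 0)
        ∧ (∀ u, u < k → 2 * u + 4 < y → ∀ s, inj k y (U m k t) s (k + u) = 0) := by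
      by_cases hcond : 4 ≤ y ∧ y % 2 = 0 ∧ y ≤ 2 * k + 2
      · set i := (y - 4) / 2 with hidef
        have hyi : 2 * i + 4 = y := by omega
        have hik : i < k := by omega
        have hinj : inj k y (U m k t)
            = colKill (colAdd (U m k t) i (k + i) 1) i := by
          rw [inj, if_pos hcond]
        have hgap : ∀ w, i < w → w < k + i → ∀ s, U m k t s w = 0 := by
          intro w hw1 hw2 s
          rcases Nat.lt_or_ge w k with hwk | hwk
          · exact ihP w hwk (by omega) s
          · have : w = k + (w - k) := by omega
            rw [this]
            exact ihV (w - k) (by omega) (by omega) s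
        have hGN : Good (colKill (colAdd (U m k t) i (k + i) 1) i) :=
          good_colKill (good_colAdd ihG (by omega) PosP.one hgap) i
        refine ⟨hinj ▸ hGN, ?_, ?_⟩
        · intro i' hi' h2 s
          rw [hinj, colKill_apply]
          rcases eq_or_ne i' i with he | he
          · rw [if_pos he]
          · rw [if_neg he, colAdd_apply, if_neg (by omega)]
            exact ihP i' hi' (by omega) s
        · intro u hu h2 s
          rw [hinj, colKill_apply, if_neg (by omega), colAdd_apply,
            if_neg (by omega)]
          exact ihV u hu (by omega) s
      · have hinj : inj k y (U m k t) = U m k t := by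
          rw [inj, if_neg hcond]
        rw [hinj]
        refine ⟨ihG, ?_, ?_⟩
        · intro i' hi' h2 s
          have hne : 2 * i' + 4 ≠ y := by
            intro h
            exact hcond ⟨by omega, by omega, by omega⟩
          exact ihP i' hi' (by omega) s
        · intro u hu h2 s
          exact ihV u hu (by omega) s
    obtain ⟨hGN, hPN, hVN⟩ := hN
    refine ⟨?_, ?_, ?_⟩
    · rw [hUt1]
      exact good_sweep hGN k (PosP.zz y) _
    · intro i' hi' h2 s
      rw [hUt1, sweep_out _ _ _ _ _ _ (by omega)]
      exact hPN i' hi' (by omega) s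
    · intro u hu h2 s
      rw [hUt1]
      refine sweep_virgin k (zz y) (hi m k y) _ u (fun p hp s' => ?_) s
      exact hVN p (by omega) (by omega) s'

end QF

namespace QF

lemma hi_mono (m k y : ℕ) : hi m k y ≤ hi m k (y + 1) := by
  unfold hi
  have : (y - 1) / 2 ≤ (y + 1 - 1) / 2 := by omega
  omega

lemma sweep_fresh_sum {y b : ℕ} (hyb : y ≤ b) (N : ℕ → Polynomial ℤ)
    (i v : ℕ) (hiv : i ≤ v)
    (h0 : ∀ p, p < i → N p = 0)
    (hval : ∀ p, i ≤ p → p ≤ v → N p = hh (y + 1) b (p - i)) :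
    ∑ p ∈ range (v + 1), zz y ^ (v - p) * N p = hh y b (v - i) := by
  rw [hh_rec hyb]
  have hrefl := Finset.sum_range_reflect (fun p => zz y ^ (v - p) * N p) (v + 1)
  rw [← hrefl]
  have hsubset : range ((v - i) + 1) ⊆ range (v + 1) := by
    intro x hx
    simp only [Finset.mem_range] at *
    omega
  rw [← Finset.sum_subset hsubset (by
    intro j hj1 hj2
    simp only [Finset.mem_range] at hj1 hj2
    have : v + 1 - 1 - j < i := by omega
    rw [h0 _ this, mul_zero])]
  refine Finset.sum_congr rfl fun j hj => ?_
  simp only [Finset.mem_range] at hj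
  have e0 : v + 1 - 1 - j = v - j := by omega
  rw [e0]
  have e1 : v - (v - j) = j := by omega
  have e2 : (v - j) - i = (v - i) - j := by omega
  rw [e1, hval (v - j) (by omega) (by omega), e2]

theorem rowVal (m k : ℕ) (hm : k < m) (i : ℕ) (hik : i < k) :
    ∀ t, t ≤ 2 * k + 2 →
      (2 * i + 4 < 2 * k + 3 - t →
        ∀ s, U m k t i s = if s = i then 1 else 0)
      ∧ (2 * k + 3 - t ≤ 2 * i + 4 →
          (∀ s, s < k → U m k t i s = 0)
          ∧ (∀ v, v < i → U m k t i (k + v) = 0)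
          ∧ (∀ v, i ≤ v → v ≤ hi m k (2 * k + 3 - t) →
              U m k t i (k + v) = hh (2 * k + 3 - t) (2 * i + 4) (v - i))
          ∧ (∀ j, j < k → 2 * j + 1 ≥ 2 * k + 3 - t → i ≤ m - k - 1 + 2 * j →
              U m k t i (k + (m - k - 1 + 2 * j))
                = hh (2 * j + 1) (2 * i + 4) ((m - k - 1 + 2 * j) - i))) := by
  intro t
  induction t with
  | zero =>
    intro _
    constructor
    · intro _ s
      show init k i s = _
      rw [init_apply]
      by_cases h : s = i
      · rw [if_pos (⟨h.symm, by omega⟩ : i = s ∧ s < k), if_pos h]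
      · rw [if_neg (fun hc => h hc.1.symm), if_neg h]
    · intro habs
      omega
  | succ t ih =>
    intro ht1
    obtain ⟨ihA, ihB⟩ := ih (by omega)
    have hUt1 : U m k (t + 1)
        = sweep k (zz (2 * k + 2 - t)) (hi m k (2 * k + 2 - t))
            (inj k (2 * k + 2 - t) (U m k t)) := rfl
    set y := 2 * k + 2 - t with hydef
    set N := inj k y (U m k t) with hNdef
    rcases Nat.lt_or_ge (2 * i + 4) y with hA | hB
    · -- still pending
      have hpend : ∀ s, U m k t i s = if s = i then 1 else 0 := ihA (by omega)
      have hNrow : ∀ s, N i s = if s = i then 1 else 0 := by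
        by_cases hcond : 4 ≤ y ∧ y % 2 = 0 ∧ y ≤ 2 * k + 2
        · intro s
          rw [hNdef, inj, if_pos hcond, colKill_apply]
          by_cases hs1 : s = (y - 4) / 2
          · rw [if_pos hs1, eq_comm, if_neg (by omega)]
          · rw [if_neg hs1, colAdd_apply]
            by_cases hs2 : s = k + (y - 4) / 2
            · rw [if_pos hs2, hpend, hpend, if_neg (by omega), if_neg (by omega),
                eq_comm, if_neg (by omega)]
              ring
            · rw [if_neg hs2]
              exact hpend s
        · intro s
          rw [hNdef, inj, if_neg hcond]
          exact hpend s
      constructor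
      · intro _ s
        rw [hUt1]
        by_cases hs : k + 1 ≤ s ∧ s ≤ k + hi m k y
        · have hsv : s = k + (s - k) := by omega
          rw [hsv, sweep_pos k _ _ _ i (s - k) (by omega)]
          rw [Finset.sum_eq_zero, eq_comm, if_neg (by omega)]
          intro p hp
          rw [hNrow (k + p), if_neg (by omega), mul_zero]
        · rw [sweep_out k _ _ _ i s (by omega)]
          exact hNrow s
      · intro habs
        omega
    · -- injected
      have hy1 : 1 ≤ y := by omega
      have hYold : 2 * k + 3 - t = y + 1 := by omega
      have hmid : (∀ s, s < k → N i s = 0)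
          ∧ (∀ v, v < i → N i (k + v) = 0)
          ∧ (∀ p, i ≤ p → p ≤ hi m k y → N i (k + p) = hh (y + 1) (2 * i + 4) (p - i))
          ∧ (∀ j, j < k → 2 * j + 1 > y → i ≤ m - k - 1 + 2 * j →
              N i (k + (m - k - 1 + 2 * j))
                = hh (2 * j + 1) (2 * i + 4) ((m - k - 1 + 2 * j) - i)) := by
        rcases eq_or_lt_of_le hB with hB1 | hB2
        · -- y = 2 i + 4 : inject right now
          have hpend : ∀ s, U m k t i s = if s = i then 1 else 0 := ihA (by omega)
          have hcond : 4 ≤ y ∧ y % 2 = 0 ∧ y ≤ 2 * k + 2 := by omega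
          have hii : (y - 4) / 2 = i := by omega
          have hNs : ∀ s, N i s = if s = k + i then 1 else 0 := by
            intro s
            rw [hNdef, inj, if_pos hcond, hii, colKill_apply]
            by_cases hsi : s = i
            · rw [if_pos hsi, eq_comm, if_neg (by omega)]
            · rw [if_neg hsi, colAdd_apply]
              by_cases hski : s = k + i
              · rw [if_pos hski, hpend (k + i), hpend i, if_neg (by omega),
                  if_pos rfl, if_pos hski]
                ring
              · rw [if_neg hski, hpend s, if_neg hsi, if_neg hski]
          refine ⟨?_, ?_, ?_, ?_⟩
          · intro s hs
            rw [hNs, if_neg (by omega)]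
          · intro v hv
            rw [hNs, if_neg (by omega)]
          · intro p hp1 _
            rw [hNs]
            have hba : 2 * i + 4 < y + 1 := by omega
            rw [hh_of_gt hba]
            rcases eq_or_lt_of_le hp1 with he | hlt
            · rw [if_pos (by omega), if_pos (by omega)]
            · rw [if_neg (by omega), if_neg (by omega)]
          · intro j hj hj2 hij
            have hbj : 2 * j ≤ m - k - 1 + 2 * j := by omega
            rw [hNs, if_neg (by omega), hh_of_gt (by omega), if_neg (by omega)]
        · -- y < 2 i + 4 : injected earlier
          obtain ⟨b1, b2, b3, b4⟩ := ihB (by omega)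
          rw [hYold] at b3 b4
          have hNeq : ∀ s, N i s = U m k t i s := by
            by_cases hcond : 4 ≤ y ∧ y % 2 = 0 ∧ y ≤ 2 * k + 2
            · intro s
              have hik2 : (y - 4) / 2 < k := by omega
              rw [hNdef, inj, if_pos hcond, colKill_apply]
              by_cases hs1 : s = (y - 4) / 2
              · rw [if_pos hs1, hs1, b1 _ hik2]
              · rw [if_neg hs1, colAdd_apply]
                by_cases hs2 : s = k + (y - 4) / 2
                · rw [if_pos hs2, b1 _ hik2, hs2]
                  ring
                · rw [if_neg hs2]
            · intro s
              rw [hNdef, inj, if_neg hcond]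
          refine ⟨?_, ?_, ?_, ?_⟩
          · intro s hs
            rw [hNeq]
            exact b1 s hs
          · intro v hv
            rw [hNeq]
            exact b2 v hv
          · intro p hp1 hp2
            rw [hNeq]
            exact b3 p hp1 (le_trans hp2 (hi_mono m k y))
          · intro j hj hj2 hij
            rw [hNeq]
            exact b4 j hj (by omega) hij
      obtain ⟨m1, m2, m3, m4⟩ := hmid
      have hc1 : ∀ s, s < k → U m k (t + 1) i s = 0 := by
        intro s hs
        rw [hUt1, sweep_out _ _ _ _ _ _ (by omega)]
        exact m1 s hs
      have hc2 : ∀ v, v < i → U m k (t + 1) i (k + v) = 0 := by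
        intro v hv
        rcases le_or_gt v (hi m k y) with hle | hlt
        · rw [hUt1, sweep_pos _ _ _ _ _ v hle]
          refine Finset.sum_eq_zero fun p hp => ?_
          simp only [Finset.mem_range] at hp
          rw [m2 p (by omega), mul_zero]
        · rw [hUt1, sweep_out _ _ _ _ _ _ (by omega)]
          exact m2 v hv
      have hc3 : ∀ v, i ≤ v → v ≤ hi m k y →
          U m k (t + 1) i (k + v) = hh y (2 * i + 4) (v - i) := by
        intro v hiv hvhi
        rw [hUt1, sweep_pos _ _ _ _ _ v hvhi]
        exact sweep_fresh_sum hB (fun p => N i (k + p)) i v hiv m2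
          (fun p hp1 hp2 => m3 p hp1 (le_trans hp2 hvhi))
      have hc4 : ∀ j, j < k → 2 * j + 1 ≥ y → i ≤ m - k - 1 + 2 * j →
          U m k (t + 1) i (k + (m - k - 1 + 2 * j))
            = hh (2 * j + 1) (2 * i + 4) ((m - k - 1 + 2 * j) - i) := by
        intro j hj hj2 hij
        by_cases hje : 2 * j + 1 = y
        · have hj12 : (y - 1) / 2 = j := by omega
          have hhi : hi m k y = m - k - 1 + 2 * j := by
            unfold hi
            rw [hj12, min_eq_right (by omega : j ≤ k - 1)]
          have := hc3 (m - k - 1 + 2 * j) hij (le_of_eq hhi.symm)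
          rw [this, hje]
        · have hlt : y < 2 * j + 1 := by omega
          have hhilt : hi m k y < m - k - 1 + 2 * j := by
            unfold hi
            have h1 : min (k - 1) ((y - 1) / 2) ≤ (y - 1) / 2 := min_le_right _ _
            have h2 : (y - 1) / 2 < j := by omega
            omega
          rw [hUt1, sweep_out _ _ _ _ _ _ (by omega)]
          exact m4 j hj (by omega) hij
      constructor
      · intro habs
        omega
      · intro _
        have hYnew : 2 * k + 3 - (t + 1) = y := by omega
        rw [hYnew]
        exact ⟨hc1, hc2, hc3, hc4⟩

end QF

namespace QF

lemma hgen_neg {j r : ℤ} (hj : j < 0) : hgen j r = 0 := by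
  simp only [hgen]
  rw [if_neg (by omega), if_neg (by omega)]

lemma final_entry (m k : ℕ) (hm : k < m) (i j : ℕ) (hik : i < k) (hjk : j < k) :
    U m k (2 * k + 2) i (k + (m - k - 1 + 2 * j))
      = if i ≤ m - k - 1 + 2 * j
          then hh (2 * j + 1) (2 * i + 4) ((m - k - 1 + 2 * j) - i) else 0 := by
  obtain ⟨-, hBr⟩ := rowVal m k hm i hik (2 * k + 2) le_rfl
  have h1 : 2 * k + 3 - (2 * k + 2) = 1 := by omega
  obtain ⟨b1, b2, b3, b4⟩ := hBr (by omega)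
  by_cases hij : i ≤ m - k - 1 + 2 * j
  · rw [if_pos hij]
    exact b4 j hjk (by omega) hij
  · rw [if_neg hij]
    exact b2 _ (by omega)

lemma entry_match (m k ii jj : ℕ) (hm : k < m) (hik : ii < k) (hjk : jj < k) :
    hgen ((m : ℤ) - k - ii + 2 * jj - 1) ((ii : ℤ) - jj + 2)
      = U m k (2 * k + 2) ii (k + (m - k - 1 + 2 * jj)) := by
  rw [final_entry m k hm ii jj hik hjk]
  by_cases hij : ii ≤ m - k - 1 + 2 * jj
  · rw [if_pos hij]
    set dN := (m - k - 1 + 2 * jj) - ii with hdN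
    have hd : (m : ℤ) - k - ii + 2 * jj - 1 = (dN : ℤ) := by
      push_cast [hdN]
      omega
    by_cases hr : jj ≤ ii + 1
    · -- genuine h case
      set rm1 := ii + 1 - jj with hrm1
      have hb : 2 * ii + 4 = (2 * jj + 1) + (2 * rm1 + 1) := by omega
      rw [hb, hh_eq_hgN rm1 (2 * jj + 1) dN (by omega)]
      simp only [hgen]
      rw [if_pos ⟨by omega, by omega⟩]
      have htd : ((m : ℤ) - k - ii + 2 * jj - 1).toNat = dN := by
        rw [hd]
        exact Int.toNat_natCast dN
      have htr : (((ii : ℤ) - jj + 2) - 1).toNat = rm1 := by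
        have : (ii : ℤ) - jj + 2 - 1 = (rm1 : ℤ) := by
          push_cast [hrm1]
          omega
        rw [this]
        exact Int.toNat_natCast rm1
      rw [htd, htr]
      rfl
    · -- r ≤ 0 degenerate case
      rw [hh_of_gt (by omega)]
      simp only [hgen]
      rw [if_neg (by
        rintro ⟨-, h2⟩
        omega)]
      have : ((m : ℤ) - k - ii + 2 * jj - 1 = 0) ↔ (dN = 0) := by
        rw [hd]
        omega
      by_cases h0 : dN = 0
      · rw [if_pos (this.mpr h0), if_pos h0]
      · rw [if_neg (fun hc => h0 (this.mp hc)), if_neg h0]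
  · rw [if_neg hij]
    refine hgen_neg (by push_cast; omega)

theorem P_pos (m k : ℕ) : PosP (P m k) := by
  rcases Nat.eq_zero_or_pos k with hk0 | hk0
  · subst hk0
    have : P m 0 = 1 := Matrix.det_isEmpty
    rw [this]
    exact PosP.one
  rcases Nat.lt_or_ge k m with hm | hm
  · -- main case 0 < k < m
    have key : P m k
        = ((U m k (2 * k + 2)).submatrix (fun i : Fin k => (i : ℕ))
            (fun j : Fin k => k + (m - k - 1 + 2 * (j : ℕ)))).det := by
      unfold P
      refine congrArg Matrix.det (Matrix.ext fun i j => ?_)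
      simp only [Matrix.of_apply, Matrix.submatrix_apply]
      exact entry_match m k i j hm i.2 j.2
    rw [key]
    refine (mainInv m k (2 * k + 2)).1 k _ _ ?_ ?_
    · intro a b hab
      exact hab
    · intro a b hab
      have h1 : (a : ℕ) < (b : ℕ) := hab
      show k + (m - k - 1 + 2 * (a : ℕ)) < k + (m - k - 1 + 2 * (b : ℕ))
      omega
  · -- k ≥ m : first column is zero
    have hcol : ∀ i : Fin k,
        (Matrix.of fun i j : Fin k =>
          hgen ((m : ℤ) - k - i + 2 * j - 1) ((i : ℤ) - j + 2)) i ⟨0, hk0⟩ = 0 := by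
      intro i
      simp only [Matrix.of_apply]
      refine hgen_neg ?_
      have : ((⟨0, hk0⟩ : Fin k) : ℤ) = 0 := rfl
      rw [this]
      have hi0 : (0 : ℤ) ≤ (i : ℤ) := by positivity
      omega
    have : P m k = 0 := by
      unfold P
      exact Matrix.det_eq_zero_of_column_eq_zero ⟨0, hk0⟩ hcol
    rw [this]
    exact PosP.zero

end QF

/-- `P_{m,k}` has nonnegative (integer) coefficients. -/
theorem stmt8 (m k : ℕ) : ∀ i : ℕ, ∃ c : ℕ, (P m k).coeff i = (c : ℤ) := by
  intro i
  exact Int.eq_ofNat_of_zero_le (QF.P_pos m k i)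
end

section
/- Let P_{m,k}(q) = \det( h_{m-k-i+2j-1}(\{1,q\}^{i-j+2}) )_{i,j \in \{0,\dots,k-1\}}. Then P_{m,k} is a palindromic (self-reciprocal) polynomial in q: if d = \deg P_{m,k}, then q^d P_{m,k}(1/q) = P_{m,k}(q). -/
open Finset Polynomial

lemma reflect_sum {ι : Type*} (s : Finset ι) (N : ℕ) (f : ι → Polynomial ℤ) :
    reflect N (∑ i ∈ s, f i) = ∑ i ∈ s, reflect N (f i) := by
  induction s using Finset.cons_induction with
  | empty => simp
  | cons a s ha ih => rw [Finset.sum_cons, Finset.sum_cons, reflect_add, ih]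

lemma hgen_neg {j r : ℤ} (h : j < 0) : hgen j r = 0 := by
  rw [hgen, if_neg (by omega), if_neg (by omega)]

lemma hgen_natDegree_le (j r : ℤ) : (hgen j r).natDegree ≤ j.toNat := by
  rw [hgen]
  split_ifs with h1 h2
  · apply natDegree_sum_le_of_forall_le
    intro i hi
    refine le_trans natDegree_mul_le ?_
    have hc : natDegree ((((r - 1).toNat + i).choose (r - 1).toNat : Polynomial ℤ) *
        ((j.toNat + (r - 1).toNat - i).choose (r - 1).toNat : Polynomial ℤ)) ≤ 0 := by
      refine le_trans natDegree_mul_le ?_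
      simp [natDegree_natCast]
    have hx : natDegree ((X : Polynomial ℤ) ^ i) ≤ i := natDegree_X_pow_le i
    have : i ≤ j.toNat := by
      simp only [Finset.mem_range] at hi; omega
    omega
  · simp
  · simp

lemma hgen_reflect (j r : ℤ) (hj : 0 ≤ j) : reflect j.toNat (hgen j r) = hgen j r := by
  rw [hgen]
  split_ifs with h1 h2
  · set J := j.toNat with hJ
    set R := (r-1).toNat with hR
    rw [reflect_sum]
    have hterm : ∀ i ∈ range (J+1),
        reflect J ((((R + i).choose R : Polynomial ℤ) *
          ((J + R - i).choose R : Polynomial ℤ)) * X ^ i) =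
        C ((((R + i).choose R) * ((J + R - i).choose R) : ℤ)) * X ^ (J - i) := by
      intro i hi
      have hiJ : i ≤ J := by simp only [Finset.mem_range] at hi; omega
      have e1 : (((R + i).choose R : Polynomial ℤ) * ((J + R - i).choose R : Polynomial ℤ))
          = C ((((R + i).choose R) * ((J + R - i).choose R) : ℤ)) := by
        push_cast
        rw [C_mul]
        simp
      rw [e1, reflect_C_mul_X_pow, revAt_le hiJ]
    rw [Finset.sum_congr rfl hterm]
    rw [← Finset.sum_range_reflect]
    apply Finset.sum_congr rfl
    intro t ht
    have htJ : t ≤ J := by simp only [Finset.mem_range] at ht; omega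
    have e0 : J + 1 - 1 - t = J - t := by omega
    rw [e0]
    have e1 : R + (J - t) = J + R - t := by omega
    have e2 : J + R - (J - t) = R + t := by omega
    have e3 : J - (J - t) = t := by omega
    rw [e1, e2, e3, C_mul]
    simp only [map_natCast]
    ring
  · have hj0 : j = 0 := h2
    subst hj0
    simp
  · simp

lemma hgen_coeff_zero (j r : ℤ) (h1 : 0 ≤ j) (h2 : 0 < r) :
    (hgen j r).coeff 0 = ((j.toNat + (r-1).toNat).choose (r-1).toNat : ℤ) := by
  rw [hgen, if_pos ⟨h1, h2⟩, finset_sum_coeff]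
  rw [Finset.sum_eq_single 0]
  · simp
  · intro t _ ht
    rw [coeff_mul_X_pow']
    rw [if_neg (by omega)]
  · intro h; exact absurd (Finset.mem_range.mpr (by omega)) h

lemma reflect_prod {ι : Type*} (s : Finset ι) (f : ι → Polynomial ℤ) (e : ι → ℕ)
    (hd : ∀ i ∈ s, (f i).natDegree ≤ e i) (hr : ∀ i ∈ s, reflect (e i) (f i) = f i) :
    reflect (∑ i ∈ s, e i) (∏ i ∈ s, f i) = ∏ i ∈ s, f i := by
  induction s using Finset.cons_induction with
  | empty => simp [reflect_one]
  | cons a s ha ih =>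
    rw [Finset.prod_cons, Finset.sum_cons]
    rw [reflect_mul _ _ (hd a (Finset.mem_cons_self a s))
      (le_trans (natDegree_prod_le s f) (Finset.sum_le_sum (fun i hi => hd i (Finset.mem_cons_of_mem hi))))]
    rw [hr a (Finset.mem_cons_self a s), ih (fun i hi => hd i (Finset.mem_cons_of_mem hi))
      (fun i hi => hr i (Finset.mem_cons_of_mem hi))]

/-- Binomial matrix whose determinant gives the constant (and leading) coefficient of `P`. -/
def Cmat (n k : ℕ) : Matrix (Fin k) (Fin k) ℤ :=
  Matrix.of fun i j => if (j : ℕ) ≤ (i : ℕ) + 1 then ((n + j).choose (i + 1 - j) : ℤ) else 0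

lemma Cmat_det_zero (k : ℕ) : (Cmat 0 (k + 1)).det = 0 := by
  apply Matrix.det_eq_zero_of_column_eq_zero 0
  intro i
  show (if ((0:Fin (k+1)) : ℕ) ≤ (i : ℕ) + 1 then ((0 + ((0:Fin (k+1)):ℕ)).choose (i + 1 - ((0:Fin (k+1)):ℕ)) : ℤ) else 0) = 0
  simp [Nat.choose_eq_zero_of_lt (by omega : (0:ℕ) < i + 1)]

/-- the lower bidiagonal matrix implementing the row operation `row i ← row i + row (i-1)`. -/
def Lmat (k : ℕ) : Matrix (Fin k) (Fin k) ℤ :=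
  Matrix.of fun i j => (if i = j then 1 else 0) + (if (j : ℕ) + 1 = (i : ℕ) then 1 else 0)

lemma Lmat_det (k : ℕ) : (Lmat k).det = 1 := by
  rw [Matrix.det_of_lowerTriangular (Lmat k)]
  · simp [Lmat, fun i : Fin k => (by omega : ¬ ((i:ℕ) + 1 = i))]
  · intro i j h
    simp only [OrderDual.toDual_lt_toDual] at h
    have h1 : ¬ (i = j) := by exact fun e => absurd (e ▸ le_refl i) (not_le_of_gt h)
    have h2 : ¬ ((j : ℕ) + 1 = i) := by
      have := Fin.lt_iff_val_lt_val.mp h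
      omega
    simp [Lmat, h1, h2]

lemma Lmat_mul_apply (k : ℕ) (M : Matrix (Fin k) (Fin k) ℤ) (i j : Fin k) :
    (Lmat k * M) i j = M i j + ∑ s : Fin k, (if (s : ℕ) + 1 = (i : ℕ) then M s j else 0) := by
  simp only [Matrix.mul_apply, Lmat, Matrix.of_apply, add_mul, ite_mul, one_mul, zero_mul,
    Finset.sum_add_distrib]
  congr 1
  rw [Finset.sum_ite_eq (Finset.univ : Finset (Fin k)) i (fun s => M s j)]
  simp

lemma Lmat_mul_Cmat (n k : ℕ) (i j : Fin (k+1)) :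
    (Lmat (k+1) * Cmat n (k+1)) i j =
      Cmat n (k+1) i j +
        (if h : (i : ℕ) = 0 then 0 else Cmat n (k+1) ⟨(i : ℕ) - 1, by omega⟩ j) := by
  rw [Lmat_mul_apply]
  congr 1
  by_cases h : (i : ℕ) = 0
  · rw [dif_pos h]
    apply Finset.sum_eq_zero
    intro s _
    rw [if_neg (by omega)]
  · rw [dif_neg h]
    rw [Finset.sum_eq_single (⟨(i : ℕ) - 1, by omega⟩ : Fin (k+1))]
    · rw [if_pos (by simp; omega)]
    · intro b _ hb
      rw [if_neg]
      intro hb1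
      exact hb (by apply Fin.ext; simp; omega)
    · intro h; exact absurd (Finset.mem_univ _) h

lemma choose_ite_pascal (n a b : ℕ) (ha : 1 ≤ a) :
    (if b ≤ a+1 then (((n+1)+b).choose (a+1-b) : ℤ) else 0) =
      (if b ≤ a+1 then ((n+b).choose (a+1-b) : ℤ) else 0) +
        (if b ≤ (a-1)+1 then ((n+b).choose ((a-1)+1-b) : ℤ) else 0) := by
  by_cases hb : b ≤ a
  · rw [if_pos (by omega), if_pos (by omega), if_pos (by omega)]
    have e1 : (n+1)+b = (n+b)+1 := by omega
    have e2 : a+1-b = (a-b)+1 := by omega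
    have e3 : (a-1)+1-b = a-b := by omega
    rw [e1, e2, e3, Nat.choose_succ_succ]
    push_cast; ring
  · by_cases hb1 : b = a+1
    · subst hb1
      rw [if_pos (le_refl _), if_pos (le_refl _), if_neg (by omega)]
      have e2 : a+1-(a+1) = 0 := by omega
      rw [e2]
      simp
    · rw [if_neg (by omega), if_neg (by omega), if_neg (by omega)]
      simp

lemma Cmat_entry_eq (n k : ℕ) (i j : Fin (k+1)) :
    Cmat (n+1) (k+1) i j =
      (Lmat (k+1) * Cmat n (k+1)) i j + (if i = 0 ∧ j = 0 then 1 else 0) := by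
  rw [Lmat_mul_Cmat]
  by_cases h : (i : ℕ) = 0
  · have hi : i = 0 := Fin.ext h
    subst hi
    rw [dif_pos h]
    show (if (j:ℕ) ≤ 0 + 1 then (((n+1) + (j:ℕ)).choose (0 + 1 - (j:ℕ)) : ℤ) else 0) =
      ((if (j:ℕ) ≤ 0 + 1 then ((n + (j:ℕ)).choose (0 + 1 - (j:ℕ)) : ℤ) else 0) + 0) +
        (if (0:Fin (k+1)) = 0 ∧ j = 0 then 1 else 0)
    by_cases hj : j = 0
    · subst hj
      rw [if_pos (by omega), if_pos (by omega), if_pos ⟨rfl, rfl⟩]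
      show ((n+1+0).choose 1 : ℤ) = ((n+0).choose 1 : ℤ) + 0 + 1
      simp [Nat.choose_one_right]
    · have hje : (j:ℕ) ≠ 0 := fun hc => hj (Fin.ext hc)
      by_cases hj1 : (j:ℕ) ≤ 1
      · have hj2 : (j:ℕ) = 1 := by omega
        rw [if_pos (by omega), if_pos (by omega), if_neg (fun hc => hj hc.2), hj2]
        norm_num
      · rw [if_neg (by omega), if_neg (by omega), if_neg (fun hc => hj hc.2)]
        norm_num
  · rw [dif_neg h, if_neg (fun hc => h (by simp [hc.1]))]
    rw [add_zero]
    show (if (j:ℕ) ≤ (i:ℕ) + 1 then (((n+1) + (j:ℕ)).choose ((i:ℕ) + 1 - (j:ℕ)) : ℤ) else 0) =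
      (if (j:ℕ) ≤ (i:ℕ) + 1 then ((n + (j:ℕ)).choose ((i:ℕ) + 1 - (j:ℕ)) : ℤ) else 0) +
        (if (j:ℕ) ≤ ((i:ℕ)-1) + 1 then ((n + (j:ℕ)).choose (((i:ℕ)-1) + 1 - (j:ℕ)) : ℤ) else 0)
    exact choose_ite_pascal n (i:ℕ) (j:ℕ) (by omega)

lemma submatrix_entry (M a b : ℕ) :
    (if b+1 ≤ (a+1)+1 then ((M+(b+1)).choose ((a+1)+1-(b+1)) : ℤ) else 0) +
      (if b+1 ≤ a+1 then ((M+(b+1)).choose (a+1-(b+1)) : ℤ) else 0) =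
    (if b ≤ a+1 then (((M+2)+b).choose (a+1-b) : ℤ) else 0) := by
  by_cases hb : b ≤ a
  · rw [if_pos (by omega), if_pos (by omega), if_pos (by omega)]
    have e1 : (M+2)+b = (M+(b+1))+1 := by omega
    have e2 : a+1-b = (a-b)+1 := by omega
    have e3 : (a+1)+1-(b+1) = (a-b)+1 := by omega
    have e4 : a+1-(b+1) = a-b := by omega
    rw [e1, e2, e3, e4, Nat.choose_succ_succ]
    push_cast; ring
  · by_cases hb1 : b = a+1
    · subst hb1
      rw [if_pos (by omega), if_neg (by omega), if_pos (by omega)]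
      have e3 : (a+1)+1-((a+1)+1) = 0 := by omega
      have e2 : a+1-(a+1) = 0 := by omega
      rw [e3, e2]
      simp
    · rw [if_neg (by omega), if_neg (by omega), if_neg (by omega)]
      simp

lemma Cmat_submatrix (n k : ℕ) :
    (Lmat (k+1) * Cmat n (k+1)).submatrix Fin.succ Fin.succ = Cmat (n+2) k := by
  ext i j
  simp only [Matrix.submatrix_apply]
  rw [Lmat_mul_Cmat]
  rw [dif_neg (by simp)]
  show (if ((j:ℕ)+1) ≤ ((i:ℕ)+1) + 1 then ((n + ((j:ℕ)+1)).choose (((i:ℕ)+1) + 1 - ((j:ℕ)+1)) : ℤ) else 0) +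
      (if ((j:ℕ)+1) ≤ ((i:ℕ)+1-1) + 1 then ((n + ((j:ℕ)+1)).choose (((i:ℕ)+1-1) + 1 - ((j:ℕ)+1)) : ℤ) else 0) =
      (if (j:ℕ) ≤ (i:ℕ) + 1 then (((n+2) + (j:ℕ)).choose ((i:ℕ) + 1 - (j:ℕ)) : ℤ) else 0)
  have e : (i:ℕ)+1-1 = (i:ℕ) := by omega
  rw [e]
  exact submatrix_entry n (i:ℕ) (j:ℕ)

lemma Cmat_rec (n k : ℕ) :
    (Cmat (n+1) (k+1)).det = (Cmat n (k+1)).det + (Cmat (n+2) k).det := by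
  have hB : Cmat (n+1) (k+1) =
      Matrix.updateCol (Lmat (k+1) * Cmat n (k+1)) 0
        ((fun i => (Lmat (k+1) * Cmat n (k+1)) i 0) + Pi.single 0 1) := by
    ext i j
    by_cases hj : j = 0
    · subst hj
      rw [Matrix.updateCol_self]
      rw [Cmat_entry_eq]
      simp only [Pi.add_apply, Pi.single_apply, and_true]
    · rw [Matrix.updateCol_ne hj]
      rw [Cmat_entry_eq]
      rw [if_neg (fun hc => hj hc.2)]
      ring
  rw [hB, Matrix.det_updateCol_add, Matrix.updateCol_eq_self]
  rw [Matrix.det_mul, Lmat_det, one_mul]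
  congr 1
  rw [Matrix.det_succ_column_zero]
  rw [Finset.sum_eq_single 0]
  · rw [Matrix.updateCol_self]
    simp only [Fin.val_zero, pow_zero, one_mul, Pi.single_eq_same]
    rw [Fin.succAbove_zero]
    have : (Matrix.updateCol (Lmat (k+1) * Cmat n (k+1)) 0 (Pi.single 0 1)).submatrix Fin.succ Fin.succ
        = (Lmat (k+1) * Cmat n (k+1)).submatrix Fin.succ Fin.succ := by
      ext a b
      simp only [Matrix.submatrix_apply]
      rw [Matrix.updateCol_ne (Fin.succ_ne_zero b)]
    rw [this, Cmat_submatrix]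
  · intro b _ hb
    rw [Matrix.updateCol_self, Pi.single_eq_of_ne hb]
    ring
  · intro h; exact absurd (Finset.mem_univ _) h

lemma Cmat_det_nonneg : ∀ k n, 0 ≤ (Cmat n k).det := by
  intro k
  induction k with
  | zero => intro n; rw [Matrix.det_isEmpty]; norm_num
  | succ k ih =>
    intro n
    induction n with
    | zero => rw [Cmat_det_zero]
    | succ n ihn =>
      rw [Cmat_rec]
      exact add_nonneg ihn (ih (n+2))

lemma Cmat_det_pos : ∀ k n, 0 < (Cmat (n+1) k).det := by
  intro k
  induction k with
  | zero => intro n; rw [Matrix.det_isEmpty]; norm_num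
  | succ k ih =>
    intro n
    rw [Cmat_rec]
    exact add_pos_of_nonneg_of_pos (Cmat_det_nonneg (k+1) n) (ih (n+1))


lemma entry_coeff_zero (m k n : ℕ) (hm : k < m) (hn : n = m - k) (i j : Fin k) :
    (hgen ((m : ℤ) - k - i + 2 * j - 1) ((i : ℤ) - j + 2)).coeff 0 = Cmat n k i j := by
  simp only [Cmat, Matrix.of_apply]
  by_cases hr : (j : ℕ) ≤ (i : ℕ) + 1
  · by_cases hj : (0:ℤ) ≤ (m : ℤ) - k - i + 2 * j - 1
    · rw [hgen_coeff_zero _ _ hj (by push_cast; omega)]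
      rw [if_pos hr]
      have e2 : ((i : ℤ) - j + 2 - 1).toNat = (i : ℕ) + 1 - (j : ℕ) := by push_cast; omega
      have e1 : ((m : ℤ) - k - i + 2 * j - 1).toNat + ((i : ℤ) - j + 2 - 1).toNat
          = n + (j : ℕ) := by push_cast; omega
      rw [e1, e2]
    · push_neg at hj
      rw [hgen_neg hj, coeff_zero, if_pos hr]
      have : n + (j : ℕ) < (i : ℕ) + 1 - (j : ℕ) := by push_cast at hj ⊢; omega
      rw [Nat.choose_eq_zero_of_lt this]
      norm_num
  · have hgz : hgen ((m : ℤ) - k - i + 2 * j - 1) ((i : ℤ) - j + 2) = 0 := by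
      rw [hgen, if_neg (by push_cast; omega), if_neg (by push_cast; omega)]
    rw [hgz, coeff_zero, if_neg hr]


/-- `P_{m,k}` is palindromic: with `d = deg P_{m,k}`, `q^d P_{m,k}(1/q) = P_{m,k}(q)`,
i.e. reversing the coefficient sequence up to the degree leaves it unchanged. -/
theorem stmt9 (m k : ℕ) :
    Polynomial.reflect (P m k).natDegree (P m k) = P m k := by
  by_cases hm : m ≤ k
  · rcases Nat.eq_zero_or_pos k with hk | hk
    · subst hk
      have h1 : P m 0 = 1 := Matrix.det_isEmpty
      rw [h1]
      simp [reflect_one]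
    · have h0 : P m k = 0 := by
        apply Matrix.det_eq_zero_of_column_eq_zero (⟨0, hk⟩ : Fin k)
        intro i
        simp only [Matrix.of_apply]
        apply hgen_neg
        have hz : (((⟨0, hk⟩ : Fin k) : ℕ) : ℤ) = 0 := by norm_num
        push_cast [hz]
        omega
      rw [h0]
      simp
  · push_neg at hm
    set n : ℕ := m - k with hn
    set D : ℕ := ∑ i : Fin k, (m - k - 1 + (i : ℕ)) with hD
    have key : ∀ σ : Equiv.Perm (Fin k),
        (((Equiv.Perm.sign σ : ℤ) : Polynomial ℤ) *
          ∏ i, (Matrix.of fun i j : Fin k =>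
            hgen ((m : ℤ) - k - i + 2 * j - 1) ((i : ℤ) - j + 2)) (σ i) i).natDegree ≤ D ∧
        reflect D (((Equiv.Perm.sign σ : ℤ) : Polynomial ℤ) *
          ∏ i, (Matrix.of fun i j : Fin k =>
            hgen ((m : ℤ) - k - i + 2 * j - 1) ((i : ℤ) - j + 2)) (σ i) i) =
        ((Equiv.Perm.sign σ : ℤ) : Polynomial ℤ) *
          ∏ i, (Matrix.of fun i j : Fin k =>
            hgen ((m : ℤ) - k - i + 2 * j - 1) ((i : ℤ) - j + 2)) (σ i) i := by
      intro σ
      by_cases hz : (∏ i, (Matrix.of fun i j : Fin k =>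
          hgen ((m : ℤ) - k - i + 2 * j - 1) ((i : ℤ) - j + 2)) (σ i) i) = 0
      · rw [hz, mul_zero]
        exact ⟨by simp, reflect_zero⟩
      · have hall : ∀ i : Fin k, (0:ℤ) ≤ (m : ℤ) - k - (σ i) + 2 * i - 1 := by
          intro i
          by_contra hneg
          exact hz (Finset.prod_eq_zero (Finset.mem_univ i)
            (by simp only [Matrix.of_apply]; exact hgen_neg (by omega)))
        set e : Fin k → ℕ := fun i => ((m : ℤ) - k - (σ i) + 2 * i - 1).toNat with he
        have hsum : ∑ i, e i = D := by
          have hcast : ∀ i : Fin k, ((e i : ℤ)) = (m : ℤ) - k - (σ i) + 2 * i - 1 :=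
            fun i => Int.toNat_of_nonneg (hall i)
          have hmain : ((∑ i, e i : ℕ) : ℤ) = ((D : ℕ) : ℤ) := by
            push_cast
            rw [Finset.sum_congr rfl (fun i _ => hcast i)]
            have step1 : ∑ i : Fin k, ((m : ℤ) - k - (σ i) + 2 * i - 1)
                = (∑ i : Fin k, ((m : ℤ) - k + 2 * i - 1)) - ∑ i : Fin k, ((σ i : ℕ) : ℤ) := by
              rw [← Finset.sum_sub_distrib]
              apply Finset.sum_congr rfl
              intro i _
              ring
            rw [step1, Equiv.sum_comp σ (fun i : Fin k => ((i : ℕ) : ℤ)), ← Finset.sum_sub_distrib,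
              hD]
            push_cast
            apply Finset.sum_congr rfl
            intro i _
            omega
          exact_mod_cast hmain
        constructor
        · refine le_trans natDegree_mul_le ?_
          rw [natDegree_intCast, zero_add, ← hsum]
          refine le_trans (natDegree_prod_le _ _) ?_
          apply Finset.sum_le_sum
          intro i _
          simp only [Matrix.of_apply]
          exact hgen_natDegree_le _ _
        · rw [← C_eq_intCast, reflect_C_mul, ← hsum]
          rw [reflect_prod Finset.univ _ e
            (fun i _ => by simp only [Matrix.of_apply]; exact hgen_natDegree_le _ _)
            (fun i _ => by simp only [Matrix.of_apply]; exact hgen_reflect _ _ (hall i))]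
    have hrefl : reflect D (P m k) = P m k := by
      rw [P, Matrix.det_apply', reflect_sum]
      exact Finset.sum_congr rfl (fun σ _ => (key σ).2)
    have hdeg : (P m k).natDegree ≤ D := by
      rw [P, Matrix.det_apply']
      exact natDegree_sum_le_of_forall_le _ _ (fun σ _ => (key σ).1)
    have hc0 : (P m k).coeff 0 = (Cmat n k).det := by
      rw [P, coeff_zero_eq_eval_zero, ← coe_evalRingHom, RingHom.map_det]
      congr 1
      ext i j
      show (evalRingHom 0) ((Matrix.of fun i j : Fin k =>
          hgen ((m : ℤ) - k - i + 2 * j - 1) ((i : ℤ) - j + 2)) i j) = Cmat n k i j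
      simp only [Matrix.of_apply, coe_evalRingHom]
      rw [← coeff_zero_eq_eval_zero]
      exact entry_coeff_zero m k n hm hn i j
    have hpos : 0 < (Cmat n k).det := by
      have h1 : n = (n - 1) + 1 := by omega
      rw [h1]
      exact Cmat_det_pos k (n - 1)
    have hcD : (P m k).coeff D = (P m k).coeff 0 := by
      conv_lhs => rw [← hrefl]
      rw [coeff_reflect, revAt_le (le_refl D), Nat.sub_self]
    have hDle : D ≤ (P m k).natDegree :=
      le_natDegree_of_ne_zero (by rw [hcD, hc0]; exact hpos.ne')
    have hdeq : (P m k).natDegree = D := le_antisymm hdeg hDle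
    rw [hdeq]
    exact hrefl
end
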